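/- arXiv:2502.15048 — 4 statements merged into one kernel-verified Lean document; each statement's English description precedes it below -/
import Mathlib

section
/- Let (R, m, k) be a commutative Noetherian local ring and X an R-module. If the socle of X is not contained in mX, then k is a direct summand of X as an R-module. -/
open IsLocalRing

/-- If the socle of `X` is not contained in `m • X`, then the residue field `k`
is a direct summand of `X` as an `R`-module. -/
theorem stmt_0 (R : Type) [CommRing R] [IsNoetherianRing R] [IsLocalRing R]
    (X : Type) [AddCommGroup X] [Module R X]
    (hsoc : ∃ x : X, (∀ r ∈ maximalIdeal R, r • x = 0) ∧
      x ∉ (maximalIdeal R) • (⊤ : Submodule R X)) :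
    ∃ Y : Submodule R X, Nonempty (X ≃ₗ[R] (ResidueField R × Y)) := by
  obtain ⟨x, hx1, hx2⟩ := hsoc
  let k := ResidueField R
  let N : Submodule R X := (maximalIdeal R) • ⊤
  let Q := X ⧸ N
  letI : Module k Q :=
    (inferInstance : Module (R ⧸ maximalIdeal R) (X ⧸ (maximalIdeal R • ⊤ : Submodule R X)))
  letI : IsScalarTower R k Q :=
    (inferInstance : IsScalarTower R (R ⧸ maximalIdeal R)
      (X ⧸ (maximalIdeal R • ⊤ : Submodule R X)))
  let xb : Q := Submodule.Quotient.mk x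
  have hxb : xb ≠ 0 := fun h => hx2 ((Submodule.Quotient.mk_eq_zero _).mp h)
  let f : k →ₗ[k] Q := LinearMap.toSpanSingleton k Q xb
  have hfinj : LinearMap.ker f = ⊥ := LinearMap.ker_toSpanSingleton k hxb
  obtain ⟨g, hg⟩ := f.exists_leftInverse_of_injective hfinj
  let φ : X →ₗ[R] k := (g.restrictScalars R) ∘ₗ N.mkQ
  have hker : maximalIdeal R ≤ LinearMap.ker (LinearMap.toSpanSingleton R X x) := by
    intro r hr
    simp [LinearMap.mem_ker, hx1 r hr]
  let σ : k →ₗ[R] X := Submodule.liftQ (maximalIdeal R) (LinearMap.toSpanSingleton R X x) hker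
  have hcomp : ∀ c : k, φ (σ c) = c := by
    intro c
    induction c using Quotient.inductionOn' with
    | h r =>
      have h1 : σ (Quotient.mk'' r) = r • x := rfl
      have h2 : φ (r • x) = residue R r := by
        show g (N.mkQ (r • x)) = _
        have hmk : N.mkQ (r • x) = (residue R r) • xb := rfl
        rw [hmk, map_smul]
        have : g xb = 1 := by
          have := LinearMap.congr_fun hg (1 : k)
          simpa [f] using this
        rw [this, smul_eq_mul, mul_one]
      rw [h1]; exact h2
  have hπ : ∀ y : X, y - σ (φ y) ∈ LinearMap.ker φ := by
    intro y
    simp [LinearMap.mem_ker, hcomp]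
  let F : X →ₗ[R] k × LinearMap.ker φ :=
    φ.prod ((LinearMap.id - σ ∘ₗ φ).codRestrict _ (fun y => hπ y))
  let G : k × LinearMap.ker φ →ₗ[R] X := σ.coprod (LinearMap.ker φ).subtype
  refine ⟨LinearMap.ker φ, ⟨LinearEquiv.ofLinear F G ?_ ?_⟩⟩
  · apply LinearMap.ext
    rintro ⟨c, y, hy⟩
    rw [LinearMap.mem_ker] at hy
    apply Prod.ext
    · simp [F, G, hcomp, hy]
    · apply Subtype.ext
      simp [F, G, hcomp, hy]
  · apply LinearMap.ext
    intro z
    simp [F, G]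
end

section
/- Let (R, m, k) be a commutative Noetherian local ring, I an ideal of R, M a finitely generated R-module with √I = √(Ann_R M), and N an arbitrary R-module. Then Hom_R(M, N) = 0 if and only if Hom_R(R/I, N) = 0. -/
open IsLocalRing TensorProduct LocalizedModule


lemma exists_ann_le {R N : Type} [CommRing R] [IsNoetherianRing R] [AddCommGroup N] [Module R N]
    (J K : Ideal R) (hJK : K ≤ J.radical) (y : N) (hy : y ≠ 0)
    (hJ : J ≤ (Submodule.span R {y}).annihilator) :
    ∃ x : N, x ≠ 0 ∧ K ≤ (Submodule.span R {x}).annihilator := by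
  obtain ⟨P, hP, hle⟩ := exists_le_isAssociatedPrime_of_isNoetherianRing R y hy
  obtain ⟨hprime, x, hx⟩ := isAssociatedPrime_iff.mp hP
  rw [Submodule.bot_colon'] at hle hx
  have hx0 : x ≠ 0 := by
    rintro rfl
    rw [Submodule.span_zero_singleton, Submodule.annihilator_bot] at hx
    exact hprime.ne_top hx
  refine ⟨x, hx0, ?_⟩
  rw [← hx]
  calc K ≤ J.radical := hJK
    _ ≤ (Submodule.span R {y}).annihilator.radical := Ideal.radical_mono hJ
    _ ≤ P.radical := Ideal.radical_mono hle
    _ = P := hprime.radical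

set_option maxHeartbeats 1000000 in

lemma exists_nonzero_hom {R M N : Type} [CommRing R] [IsNoetherianRing R]
    [AddCommGroup M] [Module R M] [Module.Finite R M]
    [AddCommGroup N] [Module R N]
    (P : Ideal R) (hP : P.IsPrime) (hPM : Module.annihilator R M ≤ P)
    (x₀ : N) (hx₀ : x₀ ≠ 0) (hann : P = (Submodule.span R {x₀}).annihilator) :
    ∃ φ : M →ₗ[R] N, φ ≠ 0 := by
  classical
  let Rp := Localization.AtPrime P
  let Mp := LocalizedModule P.primeCompl M
  let mkL : M →ₗ[R] Mp := mkLinearMap P.primeCompl M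
  haveI hsupp : Nontrivial Mp := by
    have h1 := Module.support_eq_zeroLocus (R := R) (M := M)
    have hmem : (⟨P, hP⟩ : PrimeSpectrum R) ∈ Module.support R M := by
      rw [h1]; exact hPM
    exact hmem
  haveI : Module.Finite Rp Mp :=
    Module.Finite.of_isLocalizedModule P.primeCompl (mkLinearMap P.primeCompl M)
  let κ := ResidueField Rp
  haveI : Nontrivial (κ ⊗[Rp] Mp) := by
    rw [← not_subsingleton_iff_nontrivial]
    intro h
    exact (not_subsingleton_iff_nontrivial.mpr hsupp)
      ((IsLocalRing.subsingleton_tensorProduct (M := Mp)).mp h)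
  -- R-module structure on κ
  haveI : IsScalarTower R Rp κ := IsScalarTower.of_algebraMap_eq fun x => rfl
  -- a nonzero functional on the fiber
  let b := Module.Basis.ofVectorSpace κ (κ ⊗[Rp] Mp)
  obtain ⟨i⟩ := b.index_nonempty
  let f : (κ ⊗[Rp] Mp) →ₗ[κ] κ := b.coord i
  have hf : f ≠ 0 := by
    intro h
    have : f (b i) = 1 := by simp [f]
    rw [h] at this
    simp only [LinearMap.zero_apply] at this
    exact one_ne_zero this.symm
  -- span claim
  have hspan : Submodule.span κ (Set.range fun m : M => (1 : κ) ⊗ₜ[Rp] (mkL m)) = ⊤ := by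
    rw [eq_top_iff]
    rintro v -
    induction v with
    | zero => exact Submodule.zero_mem _
    | add x y hx hy => exact Submodule.add_mem _ hx hy
    | tmul c x =>
      induction x using LocalizedModule.induction_on with
      | h m s =>
        have h1 : (IsLocalization.mk' Rp (1:R) s) • (mkL m) = LocalizedModule.mk m s := by
          show (IsLocalization.mk' Rp (1:R) s) • LocalizedModule.mk m 1 = _
          rw [← Localization.mk_eq_mk', LocalizedModule.mk_smul_mk]
          simp
        have h2 : c ⊗ₜ[Rp] (LocalizedModule.mk m s)
            = ((IsLocalization.mk' Rp (1:R) s) • c) • ((1 : κ) ⊗ₜ[Rp] (mkL m)) := by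
          rw [smul_tmul', smul_eq_mul, mul_one, smul_tmul, h1]
        rw [h2]
        exact Submodule.smul_mem _ _ (Submodule.subset_span ⟨m, rfl⟩)
  -- find m with nonzero value
  have hm : ∃ m : M, f ((1 : κ) ⊗ₜ[Rp] (mkL m)) ≠ 0 := by
    by_contra hcon
    push_neg at hcon
    apply hf
    have : Submodule.span κ (Set.range fun m : M => (1 : κ) ⊗ₜ[Rp] (mkL m)) ≤ LinearMap.ker f := by
      rw [Submodule.span_le]
      rintro _ ⟨m, rfl⟩
      exact hcon m
    rw [hspan, top_le_iff] at this
    exact LinearMap.ker_eq_top.mp this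
  obtain ⟨m, hm⟩ := hm
  -- the R-linear map h : M → κ
  let f' : (κ ⊗[Rp] Mp) →ₗ[Rp] κ :=
    { toFun := f
      map_add' := f.map_add
      map_smul' := fun r x => by
        simp only [RingHom.id_apply]
        rw [algebra_compatible_smul κ r x, map_smul, ← algebra_compatible_smul κ r (f x)] }
  let h : M →ₗ[R] κ :=
    ((f' ∘ₗ ((TensorProduct.mk Rp κ Mp) 1)).restrictScalars R) ∘ₗ mkL
  have hhm : h m ≠ 0 := hm
  -- the map R → κ and its kernel
  let πₗ : R →ₗ[R] κ := Algebra.linearMap R κ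
  have hker : LinearMap.ker πₗ = P := by
    ext r
    rw [LinearMap.mem_ker]
    show residue Rp (algebraMap R Rp r) = 0 ↔ r ∈ P
    exact (Ideal.Quotient.eq_zero_iff_mem).trans
      (IsLocalization.AtPrime.to_map_mem_maximal_iff Rp P r)
  let W : Submodule R κ := LinearMap.range πₗ
  -- common denominators
  have key : ∀ c : κ, ∃ s : P.primeCompl, ∃ a : R, (s : R) • c = algebraMap R κ a := by
    intro c
    obtain ⟨z, rfl⟩ := IsLocalRing.residue_surjective (R := Rp) c
    obtain ⟨⟨a, s⟩, hz⟩ := IsLocalization.surj (M := P.primeCompl) (S := Rp) z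
    refine ⟨s, a, ?_⟩
    rw [Algebra.smul_def]
    show residue Rp (algebraMap R Rp s) * residue Rp z = residue Rp (algebraMap R Rp a)
    rw [← map_mul, mul_comm, hz]
  obtain ⟨T, hT⟩ := Module.Finite.fg_top (R := R) (M := M)
  let sf : M → P.primeCompl := fun t => (key (h t)).choose
  let s : P.primeCompl := ∏ t ∈ T, sf t
  have hsW : ∀ t ∈ T, (s : R) • h t ∈ W := by
    intro t ht
    obtain ⟨a, ha⟩ := (key (h t)).choose_spec
    have hs : s = sf t * ∏ t' ∈ T.erase t, sf t' := (Finset.mul_prod_erase T sf ht).symm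
    rw [hs, Submonoid.coe_mul, mul_comm, mul_smul, ha]
    exact W.smul_mem _ ⟨a, rfl⟩
  have hmemW : ∀ m' : M, ((s : R) • h) m' ∈ W := by
    intro m'
    have hle : (⊤ : Submodule R M) ≤ Submodule.comap ((s : R) • h) W := by
      rw [← hT, Submodule.span_le]
      intro t ht
      show ((s : R) • h) t ∈ W
      rw [LinearMap.smul_apply]
      exact hsW t ht
    simpa using hle (Submodule.mem_top : m' ∈ (⊤ : Submodule R M))
  let g0 : M →ₗ[R] W := LinearMap.codRestrict W ((s : R) • h) hmemW
  let e : (R ⧸ P) ≃ₗ[R] W :=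
    (Submodule.quotEquivOfEq P (LinearMap.ker πₗ) hker.symm).trans πₗ.quotKerEquivRange
  have hker2 : P = LinearMap.ker (LinearMap.toSpanSingleton R N x₀) := by
    ext r
    rw [LinearMap.mem_ker, LinearMap.toSpanSingleton_apply,
      ← Submodule.mem_annihilator_span_singleton, ← hann]
  let u : (R ⧸ P) →ₗ[R] N :=
    Submodule.liftQ P (LinearMap.toSpanSingleton R N x₀) (le_of_eq hker2)
  have hu : Function.Injective u := by
    rw [← LinearMap.ker_eq_bot]
    exact Submodule.ker_liftQ_eq_bot' _ _ hker2
  refine ⟨u ∘ₗ (e.symm.toLinearMap) ∘ₗ g0, ?_⟩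
  intro hzero
  apply hhm
  have h0 : u (e.symm (g0 m)) = 0 := by
    have := LinearMap.ext_iff.mp hzero m
    simpa using this
  have h1 : e.symm (g0 m) = 0 := hu (by rw [h0, map_zero])
  have h2 : g0 m = 0 := by
    have := congrArg e h1
    simpa using this
  have h3 : (s : R) • h m = 0 := congrArg Subtype.val h2
  rw [Algebra.smul_def] at h3
  rcases mul_eq_zero.mp h3 with h4 | h4
  · exfalso
    have h5 : (s : R) ∈ LinearMap.ker πₗ := by
      rw [LinearMap.mem_ker]
      exact h4
    rw [hker] at h5
    exact s.2 h5
  · exact h4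

/-- If `√I = √(Ann_R M)` for a finitely generated module `M` over a Noetherian local ring,
then `Hom_R(M, N) = 0` iff `Hom_R(R/I, N) = 0`, for any module `N`. -/
theorem stmt_5 (R : Type) [CommRing R] [IsNoetherianRing R] [IsLocalRing R]
    (I : Ideal R)
    (M : Type) [AddCommGroup M] [Module R M] [Module.Finite R M]
    (N : Type) [AddCommGroup N] [Module R N]
    (hrad : I.radical = (Module.annihilator R M).radical) :
    (∀ φ : M →ₗ[R] N, φ = 0) ↔ (∀ φ : (R ⧸ I) →ₗ[R] N, φ = 0) := by
  constructor
  · intro hM ψ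
    by_contra hψ
    have hy : ψ (Ideal.Quotient.mk I 1) ≠ 0 := by
      intro h0
      apply hψ
      apply LinearMap.ext
      intro x
      obtain ⟨r, rfl⟩ := Ideal.Quotient.mk_surjective x
      have hr : (Ideal.Quotient.mk I r) = r • (Ideal.Quotient.mk I 1) := by
        rw [Algebra.smul_def, Ideal.Quotient.algebraMap_eq, map_one, mul_one]
      rw [hr, map_smul, h0, smul_zero, LinearMap.zero_apply]
    set y := ψ (Ideal.Quotient.mk I 1) with hydef
    have hIy : I ≤ (Submodule.span R {y}).annihilator := by
      intro a ha
      rw [Submodule.mem_annihilator_span_singleton, hydef, ← map_smul]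
      have : a • (Ideal.Quotient.mk I 1) = Ideal.Quotient.mk I a := by
        rw [Algebra.smul_def, Ideal.Quotient.algebraMap_eq, map_one, mul_one]
      rw [this, Ideal.Quotient.eq_zero_iff_mem.mpr ha, map_zero]
    obtain ⟨P, hP, hle⟩ := exists_le_isAssociatedPrime_of_isNoetherianRing R y hy
    obtain ⟨hprime, x₀, hx⟩ := isAssociatedPrime_iff.mp hP
    rw [Submodule.bot_colon'] at hle hx
    have hx0 : x₀ ≠ 0 := by
      rintro rfl
      rw [Submodule.span_zero_singleton, Submodule.annihilator_bot] at hx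
      exact hprime.ne_top hx
    have hPM : Module.annihilator R M ≤ P := by
      calc Module.annihilator R M ≤ (Module.annihilator R M).radical := Ideal.le_radical
        _ = I.radical := hrad.symm
        _ ≤ (Submodule.span R {y}).annihilator.radical := Ideal.radical_mono hIy
        _ ≤ P.radical := Ideal.radical_mono hle
        _ = P := hprime.radical
    obtain ⟨φ, hφ⟩ := exists_nonzero_hom P hprime hPM x₀ hx0 hx
    exact hφ (hM φ)
  · intro hQ φ
    by_contra hφ
    have hex : ∃ m, φ m ≠ 0 := by
      by_contra hall
      push_neg at hall
      exact hφ (LinearMap.ext hall)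
    obtain ⟨m, hm⟩ := hex
    have hannle : Module.annihilator R M ≤ (Submodule.span R {φ m}).annihilator := by
      intro a ha
      rw [Submodule.mem_annihilator_span_singleton, ← map_smul,
        (Module.mem_annihilator).mp ha m, map_zero]
    obtain ⟨x, hx0, hIx⟩ := exists_ann_le (Module.annihilator R M) I
      (by rw [← hrad]; exact Ideal.le_radical) (φ m) hm hannle
    let ψ : (R ⧸ I) →ₗ[R] N := Submodule.liftQ I (LinearMap.toSpanSingleton R N x)
      (fun r hr => by
        rw [LinearMap.mem_ker, LinearMap.toSpanSingleton_apply]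
        exact (Submodule.mem_annihilator_span_singleton x r).mp (hIx hr))
    apply hx0
    have hz := LinearMap.ext_iff.mp (hQ ψ) (Ideal.Quotient.mk I 1)
    rw [LinearMap.zero_apply] at hz
    have : ψ (Ideal.Quotient.mk I 1) = x := by
      show (LinearMap.toSpanSingleton R N x) 1 = x
      rw [LinearMap.toSpanSingleton_apply, one_smul]
    rw [this] at hz
    exact hz
end

section
/- Let (R, m, k) be a commutative Noetherian local ring, I an ideal of R, M a finitely generated R-module with √I = √(Ann_R M), and N an arbitrary R-module. Then M ⊗_R N = 0 if and only if N = I·N. -/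
open scoped TensorProduct
set_option maxHeartbeats 1600000

/-- Determinant trick: if `r` maps `M` into `p•M`, `M` f.g., and `Ann M ≤ p` prime, then `r ∈ p`. -/
lemma aux_faithful {R : Type} [CommRing R] {M : Type} [AddCommGroup M] [Module R M]
    [Module.Finite R M] {p : Ideal R} (hp : p.IsPrime)
    (hAnn : Module.annihilator R M ≤ p) {r : R}
    (hr : ∀ m : M, r • m ∈ (p • ⊤ : Submodule R M)) : r ∈ p := by
  obtain ⟨q, hmonic, -, hcoeff, heval⟩ :=
    LinearMap.exists_monic_and_coeff_mem_pow_and_aeval_eq_zero_of_range_le_smul R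
      (algebraMap R (Module.End R M) r) p (by
        rintro x ⟨m, rfl⟩
        simpa [Module.algebraMap_end_apply] using hr m)
  rw [Polynomial.aeval_algebraMap_apply_eq_algebraMap_eval] at heval
  have h1 : q.eval r ∈ Module.annihilator R M := by
    rw [Module.mem_annihilator]
    intro m
    have := congrArg (fun g : Module.End R M => g m) heval
    simpa [Module.algebraMap_end_apply] using this
  have h2 : q.eval r ∈ p := hAnn h1
  have hsum : q.eval r = (∑ i ∈ Finset.range q.natDegree, q.coeff i * r ^ i) + r ^ q.natDegree := by
    rw [Polynomial.eval_eq_sum_range, Finset.sum_range_succ, hmonic.coeff_natDegree, one_mul]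
  have h3 : r ^ q.natDegree ∈ p := by
    have hmem : (∑ i ∈ Finset.range q.natDegree, q.coeff i * r ^ i) ∈ p := by
      refine Ideal.sum_mem _ fun i hi => Ideal.mul_mem_right _ _ ?_
      exact Ideal.pow_le_self (Nat.sub_ne_zero_of_lt (Finset.mem_range.mp hi)) (hcoeff i)
    have : r ^ q.natDegree = q.eval r - ∑ i ∈ Finset.range q.natDegree, q.coeff i * r ^ i := by
      rw [hsum]; ring
    rw [this]
    exact Ideal.sub_mem _ h2 hmem
  exact hp.mem_of_pow_mem _ h3

/-- If `p = Ann(y)` is a prime containing `Ann M`, `M` f.g., then there is a nonzero map `M → X`. -/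
lemma exists_hom_ne_zero {R : Type} [CommRing R]
    {M : Type} [AddCommGroup M] [Module R M] [Module.Finite R M]
    {X : Type} [AddCommGroup X] [Module R X] {p : Ideal R} (hp : p.IsPrime)
    (hAnn : Module.annihilator R M ≤ p) {y : X} (hy : p = (Submodule.span R {y}).annihilator) :
    ∃ (φ : M →ₗ[R] X) (m : M), φ m ≠ 0 := by
  classical
  set D := R ⧸ p with hD
  haveI : IsDomain D := Ideal.Quotient.isDomain p
  set M' := M ⧸ (p • ⊤ : Submodule R M) with hM'
  haveI : IsScalarTower R D M' :=
    Module.IsTorsionBySet.isScalarTower (Module.isTorsionBySet_quotient_ideal_smul M p)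
  obtain ⟨s, hs⟩ : (⊤ : Submodule R M).FG := Module.Finite.fg_top
  set t : Finset M' := s.image ((p • ⊤ : Submodule R M).mkQ) with ht
  have hspan : Submodule.span D (t : Set M') = ⊤ := by
    have hR : Submodule.span R (t : Set M') = ⊤ := by
      rw [ht, Finset.coe_image, ← Submodule.map_span, hs, Submodule.map_top]
      exact Submodule.range_mkQ _
    rw [eq_top_iff]
    intro x _
    have hx : x ∈ Submodule.span R (t : Set M') := by rw [hR]; trivial
    exact Submodule.span_le_restrictScalars R D (t : Set M') hx
  -- a generator with trivial annihilator over D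
  have hexists : ∃ m' ∈ t, ∀ d : D, d • m' = 0 → d = 0 := by
    by_contra hcon
    push_neg at hcon
    choose dfun hd1 hd2 using hcon
    set d : D := ∏ x ∈ t.attach, dfun x.1 x.2 with hd
    have hdne : d ≠ 0 := Finset.prod_ne_zero_iff.mpr fun x _ => hd2 x.1 x.2
    have hkill : ∀ m' (hm' : m' ∈ t), d • m' = 0 := by
      intro m' hm'
      have hdd : d = dfun m' hm' * ∏ x ∈ t.attach.erase ⟨m', hm'⟩, dfun x.1 x.2 := by
        rw [hd, ← Finset.mul_prod_erase t.attach _ (Finset.mem_attach t ⟨m', hm'⟩)]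
    -- note: goal closed below
      rw [hdd, mul_comm, mul_smul, hd1 m' hm', smul_zero]
    have hallzero : ∀ x : M', d • x = 0 := by
      have hsub : Submodule.span D (t : Set M') ≤ LinearMap.ker (LinearMap.lsmul D M' d) := by
        rw [Submodule.span_le]
        intro m' hm'
        simpa using hkill m' hm'
      intro x
      have hx : x ∈ LinearMap.ker (LinearMap.lsmul D M' d) := hsub (hspan ▸ Submodule.mem_top)
      simpa using hx
    obtain ⟨r, hrd⟩ := Ideal.Quotient.mk_surjective d
    have hrp : r ∉ p := fun h => hdne (by rw [← hrd]; exact Ideal.Quotient.eq_zero_iff_mem.mpr h)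
    apply hrp
    apply aux_faithful hp hAnn
    intro m
    have h0 := hallzero ((p • ⊤ : Submodule R M).mkQ m)
    rw [← hrd] at h0
    have h1 : (p • ⊤ : Submodule R M).mkQ (r • m) = 0 := h0
    rw [Submodule.mkQ_apply, Submodule.Quotient.mk_eq_zero] at h1
    exact h1
  obtain ⟨m₀', hm₀t, hm₀⟩ := hexists
  set K := FractionRing D with hK
  set V := LocalizedModule (nonZeroDivisors D) M' with hV
  set v₀ : V := LocalizedModule.mkLinearMap (nonZeroDivisors D) M' m₀' with hv₀def
  have hv₀ : v₀ ≠ 0 := by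
    intro h
    rw [hv₀def, LocalizedModule.mkLinearMap_apply,
      show (0 : V) = LocalizedModule.mk 0 1 from (LocalizedModule.zero_mk 1).symm] at h
    obtain ⟨u, hu⟩ := LocalizedModule.mk_eq.mp h
    simp only [one_smul, smul_zero] at hu
    exact nonZeroDivisors.coe_ne_zero u (hm₀ u hu)
  obtain ⟨lam, hlam⟩ : ∃ lam : Module.Dual K V, lam v₀ ≠ 0 := by
    by_contra hcon
    push_neg at hcon
    exact hv₀ ((Module.forall_dual_apply_eq_zero_iff K v₀).mp hcon)
  set g : M' →ₗ[D] K :=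
    (LinearMap.restrictScalars D lam) ∘ₗ LocalizedModule.mkLinearMap (nonZeroDivisors D) M'
    with hgdef
  have hgm₀ : g m₀' ≠ 0 := hlam
  obtain ⟨b, hb⟩ := IsLocalization.exist_integer_multiples (nonZeroDivisors D) t
    (fun m' : M' => g m')
  set g' : M' →ₗ[D] K := (b : D) • g with hg'def
  have hint : ∀ x : M', IsLocalization.IsInteger D (g' x) := by
    let σ : Submodule D M' :=
      { carrier := {x | IsLocalization.IsInteger D (g' x)}
        add_mem' := fun {x} {z} hx hz => by
          simpa [map_add] using IsLocalization.isInteger_add hx hz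
        zero_mem' := by simpa [map_zero] using IsLocalization.isInteger_zero
        smul_mem' := fun c x hx => by
          simpa [map_smul] using IsLocalization.isInteger_smul hx }
    have hσ : Submodule.span D (t : Set M') ≤ σ := Submodule.span_le.mpr fun m' hm' => by
      show IsLocalization.IsInteger D (g' m')
      simpa [hg'def] using hb m' hm'
    exact fun x => hσ (hspan ▸ Submodule.mem_top)
  have hg'm₀ : g' m₀' ≠ 0 := by
    have hbne : algebraMap D K (b : D) ≠ 0 := fun h =>
      nonZeroDivisors.coe_ne_zero b (IsFractionRing.injective D K (by rw [h, map_zero]))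
    rw [hg'def]
    simp only [LinearMap.smul_apply]
    rw [Algebra.smul_def]
    exact mul_ne_zero hbne hgm₀
  choose F hF using hint
  have hFadd : ∀ x z : M', F (x + z) = F x + F z := fun x z =>
    IsFractionRing.injective D K (by rw [map_add, hF, hF, hF, map_add])
  have hFsmul : ∀ (c : D) (x : M'), F (c • x) = c • F x := fun c x =>
    IsFractionRing.injective D K (by
      rw [hF, map_smul, ← hF x, smul_eq_mul, map_mul, Algebra.smul_def])
  set f : M' →ₗ[D] D :=
    { toFun := F
      map_add' := hFadd
      map_smul' := fun c x => by simpa using hFsmul c x } with hfdef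
  have hfm₀ : f m₀' ≠ 0 := by
    intro h
    apply hg'm₀
    rw [← hF m₀']
    have : F m₀' = (0 : D) := h
    rw [this, map_zero]
  have hscD : ∀ (r : R) (d : D), r • d = (Ideal.Quotient.mk p r) * d := fun r d => by
    rw [Algebra.smul_def, Ideal.Quotient.algebraMap_eq]
  have hscM : ∀ (r : R) (x : M'), r • x = (Ideal.Quotient.mk p r) • x := fun r x => by
    obtain ⟨m, rfl⟩ := Submodule.Quotient.mk_surjective _ x
    rw [Module.Quotient.mk_smul_mk, ← Submodule.Quotient.mk_smul]
  set fR : M' →ₗ[R] D :=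
    { toFun := f
      map_add' := f.map_add
      map_smul' := fun r x => by
        simp only [RingHom.id_apply]
        rw [hscM r x, f.map_smul, smul_eq_mul, hscD] } with hfR
  set ψ : (R ⧸ p) →ₗ[R] X := Submodule.liftQ p (LinearMap.toSpanSingleton R X y) (by
      intro r hr
      rw [LinearMap.mem_ker, LinearMap.toSpanSingleton_apply]
      exact (Submodule.mem_annihilator_span_singleton y r).mp (hy ▸ hr)) with hψ
  obtain ⟨m₁, hm₁s, hm₁⟩ := Finset.mem_image.mp hm₀t
  refine ⟨ψ ∘ₗ fR ∘ₗ (p • ⊤ : Submodule R M).mkQ, m₁, ?_⟩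
  simp only [LinearMap.comp_apply, hm₁]
  obtain ⟨r₀, hr₀⟩ := Ideal.Quotient.mk_surjective (f m₀')
  have hfRm : fR m₀' = Ideal.Quotient.mk p r₀ := hr₀.symm
  rw [hfRm]
  have hψr : ψ (Ideal.Quotient.mk p r₀) = r₀ • y := by
    show ψ (Submodule.Quotient.mk r₀) = r₀ • y
    rw [hψ, Submodule.liftQ_apply, LinearMap.toSpanSingleton_apply]
  rw [hψr]
  intro hzero
  have : r₀ ∈ p := hy ▸ (Submodule.mem_annihilator_span_singleton y r₀).mpr hzero
  apply hfm₀
  rw [← hr₀]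
  exact Ideal.Quotient.eq_zero_iff_mem.mpr this

/-- If `√I = √(Ann_R M)` for a finitely generated module `M` over a Noetherian local ring,
then `M ⊗_R N = 0` iff `N = I·N`, for any module `N`. -/
theorem stmt_6 (R : Type) [CommRing R] [IsNoetherianRing R] [IsLocalRing R]
    (I : Ideal R)
    (M : Type) [AddCommGroup M] [Module R M] [Module.Finite R M]
    (N : Type) [AddCommGroup N] [Module R N]
    (hrad : I.radical = (Module.annihilator R M).radical) :
    Subsingleton (M ⊗[R] N) ↔ I • (⊤ : Submodule R N) = ⊤ := by
  constructor
  · intro h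
    by_contra hne
    set P := N ⧸ (I • ⊤ : Submodule R N) with hP
    haveI : Nontrivial P :=
      Submodule.Quotient.nontrivial_iff.mpr hne
    haveI hMP : Subsingleton (M ⊗[R] P) :=
      (LinearMap.lTensor_surjective M
        (Submodule.mkQ_surjective (I • ⊤ : Submodule R N))).subsingleton
    set X := CharacterModule P with hX
    haveI : Subsingleton (CharacterModule (M ⊗[R] P)) := by
      constructor
      intro a c
      ext z
      rw [Subsingleton.elim z 0, map_zero, map_zero]
    haveI hsub : Subsingleton (M →ₗ[R] X) :=
      (CharacterModule.homEquiv (R := R) (A := M) (B := P)).toEquiv.subsingleton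
    have hIX : ∀ r ∈ I, ∀ x : X, r • x = 0 := by
      intro r hr x
      ext q
      obtain ⟨n, rfl⟩ := Submodule.Quotient.mk_surjective _ q
      rw [CharacterModule.smul_apply]
      have h0 : r • (Submodule.Quotient.mk n : P) = 0 := by
        rw [← Submodule.Quotient.mk_smul, Submodule.Quotient.mk_eq_zero]
        exact Submodule.smul_mem_smul hr trivial
      rw [h0, map_zero]
      rfl
    obtain ⟨q0, hq0⟩ := exists_ne (0 : P)
    obtain ⟨c, hc⟩ := CharacterModule.exists_character_apply_ne_zero_of_ne_zero hq0
    have hx0 : (c : X) ≠ 0 := fun h0 => hc (by rw [h0]; rfl)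
    obtain ⟨p, hpass, -⟩ := exists_le_isAssociatedPrime_of_isNoetherianRing R c hx0
    obtain ⟨hp, y, hy'⟩ := isAssociatedPrime_iff.mp hpass
    have hy : p = (Submodule.span R {y}).annihilator := by
      rw [hy']; ext r
      rw [Submodule.mem_colon_singleton, Submodule.mem_annihilator_span_singleton, Submodule.mem_bot]
    have hIp : I ≤ p := by
      intro r hr
      rw [hy]
      exact (Submodule.mem_annihilator_span_singleton y r).mpr (hIX r hr y)
    have hAnnp : Module.annihilator R M ≤ p :=
      calc Module.annihilator R M ≤ (Module.annihilator R M).radical := Ideal.le_radical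
        _ = I.radical := hrad.symm
        _ ≤ p.radical := Ideal.radical_mono hIp
        _ = p := hp.radical
    obtain ⟨φ, m, hφ⟩ := exists_hom_ne_zero hp hAnnp hy
    rw [Subsingleton.elim φ 0] at hφ
    exact hφ rfl
  · intro hI
    obtain ⟨n, hn⟩ : ∃ n : ℕ, I ^ n ≤ Module.annihilator R M := by
      apply Ideal.exists_pow_le_of_le_radical_of_fg
      · rw [← hrad]; exact Ideal.le_radical
      · exact IsNoetherian.noetherian I
    have htop : (Module.annihilator R M) • (⊤ : Submodule R N) = ⊤ := by
      have hpow : ∀ k : ℕ, ∀ x : N, x ∈ (I ^ k) • (⊤ : Submodule R N) := by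
        intro k
        induction k with
        | zero =>
          intro x
          rw [pow_zero, Ideal.one_eq_top, Submodule.top_smul]
          trivial
        | succ k ih =>
          intro x
          have hx : x ∈ I • (⊤ : Submodule R N) := by rw [hI]; trivial
          refine Submodule.smul_induction_on hx (fun r hr nv _ => ?_)
            (fun a b ha hb => Submodule.add_mem _ ha hb)
          refine Submodule.smul_induction_on
            (p := fun v => r • v ∈ ((I ^ (k+1)) • ⊤ : Submodule R N)) (ih nv)
            (fun s hs w _ => ?_) (fun a b ha hb => ?_)
          · show r • (s • w) ∈ ((I ^ (k+1)) • ⊤ : Submodule R N)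
            rw [smul_smul]
            refine Submodule.smul_mem_smul ?_ trivial
            rw [pow_succ']
            exact Ideal.mul_mem_mul hr hs
          · show r • (a + b) ∈ ((I ^ (k+1)) • ⊤ : Submodule R N)
            rw [smul_add]
            exact Submodule.add_mem _ ha hb
      rw [eq_top_iff]
      intro x _
      exact Submodule.smul_mono_left hn (hpow n x)
    refine subsingleton_of_forall_eq 0 fun z => ?_
    induction z using TensorProduct.induction_on with
    | zero => rfl
    | tmul m nn =>
      have hnn : nn ∈ (Module.annihilator R M) • (⊤ : Submodule R N) := by rw [htop]; trivial
      refine Submodule.smul_induction_on hnn (fun r hr nv _ => ?_) (fun x y hx hy => ?_)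
      · rw [TensorProduct.tmul_smul, TensorProduct.smul_tmul',
          Module.mem_annihilator.mp hr m, TensorProduct.zero_tmul]
      · rw [TensorProduct.tmul_add, hx, hy, add_zero]
    | add u v hu hv => rw [hu, hv, add_zero]
end

section
/- Let R be a commutative Noetherian ring, M a finitely generated R-module with Supp_R(M) = Spec(R), and N an arbitrary R-module. Then Hom_R(M, N) = 0 if and only if N = 0, and M ⊗_R N = 0 if and only if N = 0. -/
open scoped TensorProduct nonZeroDivisors

section Aux

/-- Nakayama-type lemma: if `M` is finite, `p` is prime with `Mₚ ≠ 0`, and `a ∉ p`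
satisfies `a • M ⊆ pM`, we get a contradiction. -/
lemma aux_nak (R : Type) [CommRing R] (M : Type) [AddCommGroup M] [Module R M]
    [Module.Finite R M] (p : Ideal R) [p.IsPrime]
    (hp : Nontrivial (LocalizedModule p.primeCompl M))
    (a : R) (ha : a ∉ p) (h : ∀ m : M, a • m ∈ (p • ⊤ : Submodule R M)) : False := by
  set S := p.primeCompl
  let Rp := Localization S
  let Mp := LocalizedModule S M
  let f := LocalizedModule.mkLinearMap S M
  haveI : Module.Finite Rp Mp := Module.Finite.of_isLocalizedModule S f
  let mI := IsLocalRing.maximalIdeal Rp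
  have key : ∀ m : M, f m ∈ (mI • ⊤ : Submodule Rp Mp) := by
    intro m
    have h1 : ∀ y ∈ (p • ⊤ : Submodule R M), f y ∈ (mI • ⊤ : Submodule Rp Mp) := by
      intro y hy
      refine Submodule.smul_induction_on hy ?_ ?_
      · intro c hc n _
        rw [map_smul, ← algebraMap_smul Rp c]
        exact Submodule.smul_mem_smul
          ((IsLocalization.AtPrime.to_map_mem_maximal_iff Rp p c).mpr hc) trivial
      · intro x y hx hy
        rw [map_add]
        exact Submodule.add_mem _ hx hy
    have h2 := h1 _ (h m)
    rw [map_smul, ← algebraMap_smul Rp a] at h2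
    have hu : IsUnit (algebraMap R Rp a) := IsLocalization.map_units Rp (⟨a, ha⟩ : S)
    have : f m = hu.unit⁻¹ • (hu.unit • f m) := (inv_smul_smul _ _).symm
    rw [this]
    refine Submodule.smul_mem _ _ ?_
    rwa [Units.smul_def, hu.unit_spec]
  have htop : (⊤ : Submodule Rp Mp) ≤ mI • ⊤ := by
    intro x _
    induction x using LocalizedModule.induction_on with
    | h m s =>
      have : (LocalizedModule.mk m s : Mp) = Localization.mk 1 s • f m := by
        rw [show f m = LocalizedModule.mk m 1 from rfl, LocalizedModule.mk_smul_mk,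
          one_smul, mul_one]
      rw [this]
      exact Submodule.smul_mem _ _ (key m)
  have hbot : (⊤ : Submodule Rp Mp) = ⊥ :=
    Submodule.eq_bot_of_le_smul_of_le_jacobson_bot mI ⊤
      (Module.finite_def.mp inferInstance) htop (IsLocalRing.maximalIdeal_le_jacobson ⊥)
  obtain ⟨x, y, hxy⟩ := hp
  have hz : ∀ z : Mp, z = 0 := fun z =>
    (Submodule.eq_bot_iff _).mp hbot z trivial
  exact hxy ((hz x).trans (hz y).symm)

/-- A finitely generated module over a domain containing an element with zero annihilator
admits a nonzero functional. -/
lemma aux_dual (A : Type) [CommRing A] [IsDomain A] (K : Type) [AddCommGroup K] [Module A K]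
    [Module.Finite A K] (k : K) (hk : ∀ a : A, a • k = 0 → a = 0) :
    ∃ f : K →ₗ[A] A, f ≠ 0 := by
  let F := FractionRing A
  let L := LocalizedModule A⁰ K
  let j := LocalizedModule.mkLinearMap A⁰ K
  have hinj : Function.Injective (Algebra.linearMap A F) := IsFractionRing.injective A F
  have hv : j k ≠ 0 := by
    intro e
    obtain ⟨r, hr1, hr2⟩ := LocalizedModule.mem_ker_mkLinearMap_iff.mp (LinearMap.mem_ker.mpr e)
    rw [hk r hr2] at hr1
    exact zero_notMem_nonZeroDivisors hr1
  obtain ⟨lam, hlam⟩ : ∃ lam : L →ₗ[F] F, lam (j k) ≠ 0 := by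
    by_contra hc
    push_neg at hc
    exact hv ((Module.forall_dual_apply_eq_zero_iff F (j k)).mp hc)
  let g : K →ₗ[A] F := (LinearMap.restrictScalars A lam) ∘ₗ j
  obtain ⟨s, hs⟩ := Module.Finite.fg_top (R := A) (M := K)
  obtain ⟨b, hb⟩ := IsLocalization.exist_integer_multiples A⁰ s g
  let h0 : K →ₗ[A] F := (b : A) • g
  have hmem : ∀ m : K, h0 m ∈ LinearMap.range (Algebra.linearMap A F) := by
    intro m
    have : m ∈ Submodule.span A (s : Set K) := hs ▸ Submodule.mem_top
    induction this using Submodule.span_induction with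
    | mem x hx =>
      obtain ⟨c, hc⟩ := hb x hx
      exact ⟨c, hc⟩
    | zero => rw [map_zero]; exact Submodule.zero_mem _
    | add x y _ _ hx hy => rw [map_add]; exact Submodule.add_mem _ hx hy
    | smul c x _ hx => rw [map_smul]; exact Submodule.smul_mem _ _ hx
  let e : A ≃ₗ[A] LinearMap.range (Algebra.linearMap A F) :=
    LinearEquiv.ofInjective (Algebra.linearMap A F) hinj
  refine ⟨e.symm.toLinearMap ∘ₗ (h0.codRestrict _ hmem), fun hzero => ?_⟩
  have h0k : h0 k ≠ 0 := by
    have hb0 : algebraMap A F (b : A) ≠ 0 := fun e0 =>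
      nonZeroDivisors.coe_ne_zero b (hinj (by simpa using e0))
    have : h0 k = algebraMap A F (b : A) * lam (j k) := by
      simp only [h0, LinearMap.smul_apply, Algebra.smul_def]
      rfl
    rw [this]
    exact mul_ne_zero hb0 hlam
  have : (h0.codRestrict _ hmem) k = 0 := by
    have h1 := congrArg (fun ψ => ψ k) hzero
    simp only [LinearMap.coe_comp, Function.comp_apply, LinearMap.zero_apply] at h1
    exact (LinearEquiv.map_eq_zero_iff e.symm).mp h1
  exact h0k (congrArg Subtype.val this)

/-- Main auxiliary lemma: a finite module with full support over a Noetherian ring admits a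
nonzero homomorphism to any nontrivial module. -/
lemma aux_hom (R : Type) [CommRing R] [IsNoetherianRing R]
    (M : Type) [AddCommGroup M] [Module R M] [Module.Finite R M]
    (hsupp : Module.support R M = Set.univ)
    (N : Type) [AddCommGroup N] [Module R N] [Nontrivial N] :
    ∃ φ : M →ₗ[R] N, φ ≠ 0 := by
  obtain ⟨p, hp⟩ := associatedPrimes.nonempty R N
  obtain ⟨hprime, x, hx⟩ := isAssociatedPrime_iff.mp hp
  rw [Submodule.bot_colon'] at hx
  haveI := hprime
  let A := R ⧸ p
  let K := M ⧸ (p • ⊤ : Submodule R M)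
  haveI : Module.Finite A K := Module.Finite.of_restrictScalars_finite R A K
  -- `K` has an element with trivial annihilator over `A`
  have hploc : Nontrivial (LocalizedModule p.primeCompl M) := by
    have : (⟨p, hprime⟩ : PrimeSpectrum R) ∈ Module.support R M := by
      rw [hsupp]; trivial
    exact this
  obtain ⟨k, hk⟩ : ∃ k : K, ∀ a : A, a • k = 0 → a = 0 := by
    by_contra hc
    push_neg at hc
    have htor : Module.IsTorsion A K := by
      intro z
      obtain ⟨a, ha0, ha⟩ := hc z
      exact ⟨⟨a, mem_nonZeroDivisors_of_ne_zero ha⟩, ha0⟩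
    obtain ⟨ab, hab, hab'⟩ := 
      (Submodule.annihilator_top_inter_nonZeroDivisors (R := A) (M := K) htor)
    obtain ⟨a, rfl⟩ := Ideal.Quotient.mk_surjective (I := p) ab
    have hanp : a ∉ p := by
      intro hin
      rw [Ideal.Quotient.eq_zero_iff_mem.mpr hin] at hab'
      exact zero_notMem_nonZeroDivisors hab'
    refine aux_nak R M p hploc a hanp (fun m => ?_)
    have := Submodule.mem_annihilator.mp hab
      (Submodule.Quotient.mk (p := (p • ⊤ : Submodule R M)) m) Submodule.mem_top
    rw [Module.Quotient.mk_smul_mk] at this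
    exact (Submodule.Quotient.mk_eq_zero _).mp this
  obtain ⟨f, hf⟩ := aux_dual A K k hk
  -- assemble `φ : M → K → A → N`
  have hker : p ≤ LinearMap.ker (LinearMap.toSpanSingleton R N x) := by
    intro r hr
    rw [LinearMap.mem_ker, LinearMap.toSpanSingleton_apply]
    exact (Submodule.mem_annihilator_span_singleton x r).mp (hx ▸ hr)
  let ι : A →ₗ[R] N := Submodule.liftQ p (LinearMap.toSpanSingleton R N x) hker
  have hι : Function.Injective ι := by
    rw [← LinearMap.ker_eq_bot, eq_bot_iff]
    intro ab hab
    obtain ⟨r, rfl⟩ := Ideal.Quotient.mk_surjective (I := p) ab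
    rw [LinearMap.mem_ker] at hab
    have : r • x = 0 := by
      exact hab
    have : r ∈ p := hx ▸ (Submodule.mem_annihilator_span_singleton x r).mpr this
    simpa using Ideal.Quotient.eq_zero_iff_mem.mpr this
  refine ⟨ι ∘ₗ (f.restrictScalars R) ∘ₗ (p • ⊤ : Submodule R M).mkQ, fun hzero => ?_⟩
  obtain ⟨k₀, hk₀⟩ : ∃ k₀, f k₀ ≠ 0 := by
    by_contra hc
    push_neg at hc
    exact hf (LinearMap.ext hc)
  obtain ⟨m, rfl⟩ := Submodule.Quotient.mk_surjective _ k₀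
  have := congrArg (fun ψ => ψ m) hzero
  simp only [LinearMap.coe_comp, Function.comp_apply, LinearMap.zero_apply,
    Submodule.mkQ_apply, LinearMap.coe_restrictScalars] at this
  exact hk₀ (hι (by rw [map_zero]; exact this))

end Aux

/-- If `M` is a finitely generated module over a Noetherian ring with full support, then for
any module `N`: `Hom_R(M,N) = 0` iff `N = 0`, and `M ⊗_R N = 0` iff `N = 0`. -/
theorem stmt_7 (R : Type) [CommRing R] [IsNoetherianRing R]
    (M : Type) [AddCommGroup M] [Module R M] [Module.Finite R M]
    (hsupp : Module.support R M = Set.univ)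
    (N : Type) [AddCommGroup N] [Module R N] :
    ((∀ φ : M →ₗ[R] N, φ = 0) ↔ Subsingleton N) ∧
      (Subsingleton (M ⊗[R] N) ↔ Subsingleton N) := by
  constructor
  · constructor
    · intro hφ
      by_contra hN
      rw [not_subsingleton_iff_nontrivial] at hN
      obtain ⟨φ, hφ'⟩ := aux_hom R M hsupp N
      exact hφ' (hφ φ)
    · intro hN φ
      ext m
      exact Subsingleton.elim _ _
  · constructor
    · intro hT
      by_contra hN
      rw [not_subsingleton_iff_nontrivial] at hN
      haveI : Nontrivial (CharacterModule N) := by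
        obtain ⟨n, hn⟩ := exists_ne (0 : N)
        obtain ⟨c, hc⟩ := CharacterModule.exists_character_apply_ne_zero_of_ne_zero hn
        exact ⟨c, 0, fun e => hc (by rw [e]; rfl)⟩
      obtain ⟨φ, hφ⟩ := aux_hom R M hsupp (CharacterModule N)
      obtain ⟨m, hm⟩ : ∃ m, φ m ≠ 0 := by
        by_contra hc
        push_neg at hc
        exact hφ (LinearMap.ext hc)
      obtain ⟨n, hn⟩ : ∃ n, φ m n ≠ 0 := by
        by_contra hc
        push_neg at hc
        exact hm (CharacterModule.ext _ hc)
      have h1 : (CharacterModule.uncurry (R := R) φ) (m ⊗ₜ[R] n) = φ m n := by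
        rw [CharacterModule.uncurry_apply]
        exact TensorProduct.liftAddHom_tmul _ _ _ _
      have hz : (m ⊗ₜ[R] n : M ⊗[R] N) = 0 := Subsingleton.elim _ _
      rw [hz, map_zero] at h1
      exact hn h1.symm
    · intro hN
      refine subsingleton_iff_forall_eq 0 |>.mpr fun x => ?_
      induction x using TensorProduct.induction_on with
      | zero => rfl
      | tmul m n =>
        rw [Subsingleton.elim n 0, TensorProduct.tmul_zero]
      | add x y hx hy => rw [hx, hy, add_zero]
end
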